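/- Let μ be a Borel probability measure on ℝ^d with finite second moment and let F : ℝ^d → ℝ^{d×d} be bounded and continuous. For every ε > 0 there exists δ > 0 such that for every s ∈ [0,1] and every Borel probability measure γ on ℝ^d × ℝ^d whose first marginal equals μ, whose second moment is finite, and which satisfies W_{2,γ} := (∫ |x−y|² dγ(x,y))^{1/2} ≤ δ, one has ∫ ‖F(x + s(y−x)) − F(x)‖·|x−y| dγ(x,y) ≤ ε·W_{2,γ}. -/

import Mathlib

set_option maxHeartbeats 1000000

open MeasureTheory

private lemma cs_sqrt {α : Type*} [MeasurableSpace α] {γ : Measure α} {f g : α → ℝ}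
    (hf0 : 0 ≤ᵐ[γ] f) (hg0 : 0 ≤ᵐ[γ] g) (hf : MemLp f 2 γ) (hg : MemLp g 2 γ) :
    ∫ a, f a * g a ∂γ ≤ Real.sqrt (∫ a, f a ^ 2 ∂γ) * Real.sqrt (∫ a, g a ^ 2 ∂γ) := by
  have h22 : (2:ℝ).HolderConjugate 2 := Real.HolderConjugate.two_two
  have h2 : ENNReal.ofReal (2:ℝ) = 2 := by norm_num
  have key := integral_mul_le_Lp_mul_Lq_of_nonneg h22 hf0 hg0 (h2 ▸ hf) (h2 ▸ hg)
  have hpow : ∀ x : ℝ, x ^ (2:ℝ) = x ^ 2 := fun x => by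
    rw [show (2:ℝ) = ((2:ℕ):ℝ) by norm_num, Real.rpow_natCast]
  simp only [hpow] at key
  calc ∫ a, f a * g a ∂γ ≤ (∫ a, f a ^ 2 ∂γ) ^ (1/(2:ℝ)) * (∫ a, g a ^ 2 ∂γ) ^ (1/(2:ℝ)) := key
    _ = Real.sqrt (∫ a, f a ^ 2 ∂γ) * Real.sqrt (∫ a, g a ^ 2 ∂γ) := by
        rw [Real.sqrt_eq_rpow, Real.sqrt_eq_rpow]

/-- `ℝ^d` as a Euclidean space. -/
abbrev Ed (d : ℕ) : Type := EuclideanSpace ℝ (Fin d)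

/-- Small-o estimate in the weighted Wasserstein metric: for a bounded continuous
matrix-valued map `F`, the integral `∫ ‖F(x+s(y−x)) − F(x)‖ |x−y| dγ` is a small-o of
`W_{2,γ} := (∫ |x−y|² dγ)^{1/2}`, uniformly over `s ∈ [0,1]` and over plans `γ` with
first marginal `μ`. -/
theorem smallO_weighted_wasserstein
    {d : ℕ} (μ : Measure (Ed d)) [IsProbabilityMeasure μ]
    (hμ : Integrable (fun x => ‖x‖ ^ 2) μ)
    (F : Ed d → Ed d →L[ℝ] Ed d)
    (hFc : Continuous F) (hFb : ∃ C : ℝ, ∀ x, ‖F x‖ ≤ C) :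
    ∀ ε > (0 : ℝ), ∃ δ > (0 : ℝ),
      ∀ s : ℝ, 0 ≤ s → s ≤ 1 →
      ∀ γ : Measure (Ed d × Ed d), IsProbabilityMeasure γ →
        γ.map Prod.fst = μ →
        Integrable (fun p => ‖p.2‖ ^ 2) γ →
        Integrable (fun p => ‖p.1 - p.2‖ ^ 2) γ →
        Real.sqrt (∫ p, ‖p.1 - p.2‖ ^ 2 ∂γ) ≤ δ →
        ∫ p, ‖F (p.1 + s • (p.2 - p.1)) - F p.1‖ * ‖p.1 - p.2‖ ∂γ
          ≤ ε * Real.sqrt (∫ p, ‖p.1 - p.2‖ ^ 2 ∂γ) := by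
  obtain ⟨C₀, hC₀⟩ := hFb
  set C : ℝ := max C₀ 1 with hCdef
  have hC : ∀ x, ‖F x‖ ≤ C := fun x => (hC₀ x).trans (le_max_left _ _)
  have hC1 : (1:ℝ) ≤ C := le_max_right _ _
  have hCpos : (0:ℝ) < C := lt_of_lt_of_le one_pos hC1
  intro ε hε
  set κ : ℝ := (ε / (4 * C)) ^ 2 with hκdef
  have hκpos : 0 < κ := pow_pos (div_pos hε (by positivity)) 2
  -- choose R via Markov
  set M : ℝ := ∫ x, ‖x‖ ^ 2 ∂μ with hMdef
  have hM0 : 0 ≤ M := integral_nonneg fun x => sq_nonneg _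
  set t : ℝ := 2 * M / κ + 1 with htdef
  have htpos : 0 < t := by positivity
  have hMarkov : (μ {x | t ≤ ‖x‖ ^ 2}).toReal ≤ κ / 2 := by
    have h1 := mul_meas_ge_le_integral_of_nonneg
      (μ := μ) (f := fun x => ‖x‖ ^ 2) (ae_of_all _ fun x => sq_nonneg _) hμ t
    have h2 : (μ {x | t ≤ ‖x‖ ^ 2}).toReal ≤ M / t := by
      rw [le_div_iff₀ htpos]
      linarith [show t * (μ {x | t ≤ ‖x‖ ^ 2}).toReal ≤ M from h1]
    refine h2.trans ?_
    rw [div_le_iff₀ htpos]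
    have hk : κ / 2 * t = M + κ / 2 := by
      rw [htdef]; field_simp
    linarith
  set R : ℝ := Real.sqrt t with hRdef
  have hRpos : 0 < R := Real.sqrt_pos.2 htpos
  -- uniform continuity on the compact ball
  set K : Set (Ed d) := Metric.closedBall 0 (R + 1) with hKdef
  have hK : IsCompact K := isCompact_closedBall _ _
  have hUC := hK.uniformContinuousOn_of_continuous hFc.continuousOn
  rw [Metric.uniformContinuousOn_iff_le] at hUC
  obtain ⟨η₀, hη₀pos, hη₀⟩ := hUC (ε/2) (by positivity)
  set η : ℝ := min η₀ 1 with hηdef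
  have hηpos : 0 < η := lt_min hη₀pos one_pos
  have hη1 : η ≤ 1 := min_le_right _ _
  refine ⟨η * Real.sqrt (κ/2), by positivity, ?_⟩
  intro s hs0 hs1 γ hγp hmarg hInt2 hIntΔ hW
  haveI := hγp
  set I2 : ℝ := ∫ p, ‖p.1 - p.2‖ ^ 2 ∂γ with hI2def
  have hI2nonneg : 0 ≤ I2 := integral_nonneg fun p => sq_nonneg _
  set W : ℝ := Real.sqrt I2 with hWdef
  have hW0 : 0 ≤ W := Real.sqrt_nonneg _
  have hI2le : I2 ≤ η ^ 2 * (κ / 2) := by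
    calc I2 = (Real.sqrt I2) ^ 2 := (Real.sq_sqrt hI2nonneg).symm
      _ ≤ (η * Real.sqrt (κ / 2)) ^ 2 := pow_le_pow_left₀ (Real.sqrt_nonneg _) hW 2
      _ = η ^ 2 * (κ / 2) := by rw [mul_pow, Real.sq_sqrt (by positivity)]
  have hΔc : Continuous (fun p : Ed d × Ed d => ‖p.1 - p.2‖) :=
    (continuous_fst.sub continuous_snd).norm
  have hΔ2 : MemLp (fun p : Ed d × Ed d => ‖p.1 - p.2‖) 2 γ :=
    (memLp_two_iff_integrable_sq hΔc.aestronglyMeasurable).2 hIntΔ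
  have hΔ1 : Integrable (fun p : Ed d × Ed d => ‖p.1 - p.2‖) γ := hΔ2.integrable one_le_two
  set A : Set (Ed d × Ed d) := {p | ‖p.1‖ ≤ R ∧ ‖p.1 - p.2‖ ≤ η} with hAdef
  have hAclosed : IsClosed A :=
    (isClosed_le continuous_fst.norm continuous_const).inter (isClosed_le hΔc continuous_const)
  have hAmeas : MeasurableSet A := hAclosed.measurableSet
  set ind : Ed d × Ed d → ℝ := Aᶜ.indicator (fun _ => 1) with hinddef
  have hind0 : ∀ p, 0 ≤ ind p := fun p => Set.indicator_nonneg (fun _ _ => zero_le_one) p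
  have hind1 : ∀ p, ind p ≤ 1 := by
    intro p
    by_cases hp : p ∈ Aᶜ <;> simp [hinddef, hp]
  have hindm : MemLp ind 2 γ := MemLp.indicator hAmeas.compl (memLp_const 1)
  have hFdiff : ∀ p : Ed d × Ed d, ‖F (p.1 + s • (p.2 - p.1)) - F p.1‖ ≤ 2 * C := fun p =>
    (norm_sub_le _ _).trans (by linarith [hC (p.1 + s • (p.2 - p.1)), hC p.1])
  have hsmul : ∀ p : Ed d × Ed d, p ∈ A → ‖s • (p.2 - p.1)‖ ≤ η := by
    intro p hp
    rw [norm_smul, Real.norm_of_nonneg hs0, norm_sub_rev]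
    calc s * ‖p.1 - p.2‖ ≤ 1 * η :=
          mul_le_mul hs1 hp.2 (norm_nonneg _) one_pos.le
      _ = η := one_mul _
  have hpoint : ∀ p : Ed d × Ed d,
      ‖F (p.1 + s • (p.2 - p.1)) - F p.1‖ * ‖p.1 - p.2‖
        ≤ ε / 2 * ‖p.1 - p.2‖ + 2 * C * (ind p * ‖p.1 - p.2‖) := by
    intro p
    by_cases hp : p ∈ A
    · have hx : p.1 ∈ K := by
        rw [hKdef, Metric.mem_closedBall, dist_zero_right]
        linarith [hp.1]
      have hy : p.1 + s • (p.2 - p.1) ∈ K := by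
        rw [hKdef, Metric.mem_closedBall, dist_zero_right]
        calc ‖p.1 + s • (p.2 - p.1)‖ ≤ ‖p.1‖ + ‖s • (p.2 - p.1)‖ := norm_add_le _ _
          _ ≤ R + 1 := add_le_add hp.1 ((hsmul p hp).trans hη1)
      have hd : dist (p.1 + s • (p.2 - p.1)) p.1 ≤ η₀ := by
        rw [dist_eq_norm, add_sub_cancel_left]
        exact (hsmul p hp).trans (min_le_left _ _)
      have hFF := hη₀ _ hy _ hx hd
      rw [dist_eq_norm] at hFF
      have h2 := mul_le_mul_of_nonneg_right hFF (norm_nonneg (p.1 - p.2))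
      have h3 : 0 ≤ 2 * C * (ind p * ‖p.1 - p.2‖) :=
        mul_nonneg (by positivity) (mul_nonneg (hind0 p) (norm_nonneg _))
      linarith
    · have hip : ind p = 1 := by
        rw [hinddef]
        exact Set.indicator_of_mem hp (fun _ => (1:ℝ))
      rw [hip]
      have h2 := mul_le_mul_of_nonneg_right (hFdiff p) (norm_nonneg (p.1 - p.2))
      have h3 : 0 ≤ ε / 2 * ‖p.1 - p.2‖ := by positivity
      linarith
  have hgc : Continuous
      (fun p : Ed d × Ed d => ‖F (p.1 + s • (p.2 - p.1)) - F p.1‖ * ‖p.1 - p.2‖) := by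
    have h1 : Continuous (fun p : Ed d × Ed d => p.1 + s • (p.2 - p.1)) :=
      continuous_fst.add ((continuous_snd.sub continuous_fst).const_smul s)
    exact (((hFc.comp h1).sub (hFc.comp continuous_fst)).norm).mul hΔc
  have hgint : Integrable
      (fun p : Ed d × Ed d => ‖F (p.1 + s • (p.2 - p.1)) - F p.1‖ * ‖p.1 - p.2‖) γ := by
    refine (hΔ1.const_mul (2 * C)).mono' hgc.aestronglyMeasurable ?_
    refine ae_of_all _ fun p => ?_
    rw [Real.norm_of_nonneg (mul_nonneg (norm_nonneg _) (norm_nonneg _))]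
    exact mul_le_mul_of_nonneg_right (hFdiff p) (norm_nonneg _)
  have hindΔint : Integrable (fun p : Ed d × Ed d => ind p * ‖p.1 - p.2‖) γ := by
    refine hΔ1.mono'
      ((aestronglyMeasurable_const.indicator hAmeas.compl).mul hΔc.aestronglyMeasurable) ?_
    refine ae_of_all _ fun p => ?_
    rw [Real.norm_of_nonneg (mul_nonneg (hind0 p) (norm_nonneg _))]
    calc ind p * ‖p.1 - p.2‖ ≤ 1 * ‖p.1 - p.2‖ :=
          mul_le_mul_of_nonneg_right (hind1 p) (norm_nonneg _)
      _ = ‖p.1 - p.2‖ := one_mul _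
  have hstep1 : ∫ p, ‖F (p.1 + s • (p.2 - p.1)) - F p.1‖ * ‖p.1 - p.2‖ ∂γ
      ≤ ε / 2 * (∫ p, ‖p.1 - p.2‖ ∂γ) + 2 * C * ∫ p, ind p * ‖p.1 - p.2‖ ∂γ := by
    rw [← integral_const_mul, ← integral_const_mul,
      ← integral_add (hΔ1.const_mul _) (hindΔint.const_mul _)]
    exact integral_mono hgint ((hΔ1.const_mul _).add (hindΔint.const_mul _)) hpoint
  have hone : MemLp (fun _ : Ed d × Ed d => (1:ℝ)) 2 γ := memLp_const 1
  have hb1 : ∫ p, ‖p.1 - p.2‖ ∂γ ≤ W := by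
    have hcs := cs_sqrt (γ := γ) (f := fun p : Ed d × Ed d => ‖p.1 - p.2‖) (g := fun _ => (1:ℝ))
      (ae_of_all _ fun p => norm_nonneg _) (ae_of_all _ fun _ => zero_le_one) hΔ2 hone
    simp only [mul_one, one_pow] at hcs
    rwa [integral_const, measureReal_def, measure_univ, ENNReal.toReal_one, smul_eq_mul, one_mul,
      Real.sqrt_one, mul_one] at hcs
  have hb2 : ∫ p, ind p * ‖p.1 - p.2‖ ∂γ ≤ Real.sqrt ((γ Aᶜ).toReal) * W := by
    have hcs := cs_sqrt (γ := γ) (f := ind) (g := fun p : Ed d × Ed d => ‖p.1 - p.2‖)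
      (ae_of_all _ hind0) (ae_of_all _ fun p => norm_nonneg _) hindm hΔ2
    have hindsq : ∀ p, ind p ^ 2 = ind p := by
      intro p
      by_cases hp : p ∈ Aᶜ <;> simp [hinddef, hp]
    simp only [hindsq] at hcs
    have hint : (∫ p, ind p ∂γ) = (γ Aᶜ).toReal := by
      rw [hinddef, integral_indicator_const (1:ℝ) hAmeas.compl, smul_eq_mul, mul_one, measureReal_def]
    rwa [hint] at hcs
  have hmeasA : (γ Aᶜ).toReal ≤ κ := by
    set B1 : Set (Ed d × Ed d) := {p | R < ‖p.1‖} with hB1def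
    set B2 : Set (Ed d × Ed d) := {p | η < ‖p.1 - p.2‖} with hB2def
    have hsub : Aᶜ ⊆ B1 ∪ B2 := by
      intro p hp
      rw [Set.mem_compl_iff, hAdef, Set.mem_setOf_eq, not_and_or] at hp
      rcases hp with h | h
      · exact Or.inl (lt_of_not_ge h)
      · exact Or.inr (lt_of_not_ge h)
    have hB1 : (γ B1).toReal ≤ κ / 2 := by
      have hmeasset : MeasurableSet {x : Ed d | R < ‖x‖} :=
        measurableSet_lt measurable_const measurable_norm
      have heq : γ B1 = μ {x : Ed d | R < ‖x‖} := by
        rw [← hmarg, Measure.map_apply measurable_fst hmeasset]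
        rfl
      rw [heq]
      refine le_trans (ENNReal.toReal_mono (measure_ne_top μ _) (measure_mono ?_)) hMarkov
      intro x hx
      simp only [Set.mem_setOf_eq] at hx ⊢
      have h1 : R ^ 2 < ‖x‖ ^ 2 := by
        have := pow_lt_pow_left₀ hx hRpos.le two_ne_zero
        exact this
      have h2 : R ^ 2 = t := Real.sq_sqrt htpos.le
      linarith
    have hB2 : (γ B2).toReal ≤ κ / 2 := by
      have h1 := mul_meas_ge_le_integral_of_nonneg (μ := γ)
        (f := fun p : Ed d × Ed d => ‖p.1 - p.2‖ ^ 2) (ae_of_all _ fun p => sq_nonneg _)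
        hIntΔ (η ^ 2)
      have hsub2 : B2 ⊆ {p : Ed d × Ed d | η ^ 2 ≤ ‖p.1 - p.2‖ ^ 2} := by
        intro p hp
        simp only [hB2def, Set.mem_setOf_eq] at hp ⊢
        exact pow_le_pow_left₀ hηpos.le hp.le 2
      have h2 : (γ B2).toReal ≤ (γ {p : Ed d × Ed d | η ^ 2 ≤ ‖p.1 - p.2‖ ^ 2}).toReal :=
        ENNReal.toReal_mono (measure_ne_top γ _) (measure_mono hsub2)
      have hη2 : (0:ℝ) < η ^ 2 := by positivity
      have h3 : η ^ 2 * (γ {p : Ed d × Ed d | η ^ 2 ≤ ‖p.1 - p.2‖ ^ 2}).toReal ≤ η ^ 2 * (κ / 2) := by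
        calc η ^ 2 * (γ {p : Ed d × Ed d | η ^ 2 ≤ ‖p.1 - p.2‖ ^ 2}).toReal ≤ I2 := h1
          _ ≤ η ^ 2 * (κ / 2) := hI2le
      have h4 := le_of_mul_le_mul_left h3 hη2
      linarith
    calc (γ Aᶜ).toReal ≤ (γ (B1 ∪ B2)).toReal :=
          ENNReal.toReal_mono (measure_ne_top γ _) (measure_mono hsub)
      _ ≤ (γ B1).toReal + (γ B2).toReal := by
          rw [← ENNReal.toReal_add (measure_ne_top γ _) (measure_ne_top γ _)]
          exact ENNReal.toReal_mono (by finiteness) (measure_union_le _ _)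
      _ ≤ κ := by linarith
  have hsqrtκ : Real.sqrt ((γ Aᶜ).toReal) ≤ ε / (4 * C) := by
    have h := Real.sqrt_le_sqrt hmeasA
    rwa [hκdef, Real.sqrt_sq (by positivity)] at h
  calc ∫ p, ‖F (p.1 + s • (p.2 - p.1)) - F p.1‖ * ‖p.1 - p.2‖ ∂γ
      ≤ ε / 2 * (∫ p, ‖p.1 - p.2‖ ∂γ) + 2 * C * ∫ p, ind p * ‖p.1 - p.2‖ ∂γ := hstep1
    _ ≤ ε / 2 * W + 2 * C * (Real.sqrt ((γ Aᶜ).toReal) * W) := by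
        have := mul_le_mul_of_nonneg_left hb1 (by positivity : (0:ℝ) ≤ ε / 2)
        have := mul_le_mul_of_nonneg_left hb2 (by positivity : (0:ℝ) ≤ 2 * C)
        linarith
    _ ≤ ε / 2 * W + 2 * C * (ε / (4 * C) * W) := by
        have h5 : Real.sqrt ((γ Aᶜ).toReal) * W ≤ ε / (4 * C) * W :=
          mul_le_mul_of_nonneg_right hsqrtκ hW0
        have := mul_le_mul_of_nonneg_left h5 (by positivity : (0:ℝ) ≤ 2 * C)
        linarith
    _ = ε * W := by
        field_simp
        ring
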